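/- Let f : ℝ → ℝ be continuous, 2π-periodic, and bounded. Then the equation q̈ = f(t)·sin q − cos q has a 2π-periodic solution q(t) with q(t) ∈ (0, π) for all t. -/

import Mathlib

open MeasureTheory Real Set Filter intervalIntegral Function
open scoped Topology

noncomputable section
namespace Stmt7

variable {μ : ℝ}

/-- The Green kernel `e^{-μ|t-s|}` for the periodic problem `u'' - μ² u = h` on `ℝ`. -/
def ker (μ t s : ℝ) : ℝ := Real.exp (-μ * |t - s|)

/-- The solution operator `h ↦ u` for `u'' - μ² u = h`. -/
def Tmap (μ : ℝ) (h : ℝ → ℝ) (t : ℝ) : ℝ := -(1 / (2 * μ)) * ∫ s, h s * ker μ t s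

/-- Bounded measurable data. -/
structure OK (μ : ℝ) (M : ℝ) (h : ℝ → ℝ) : Prop where
  meas : AEStronglyMeasurable h volume
  bdd : ∀ s, |h s| ≤ M

/-- primitive from -∞ -/
def AA (μ : ℝ) (h : ℝ → ℝ) (t : ℝ) : ℝ := ∫ s in Iic t, h s * Real.exp (μ * s)
/-- primitive to +∞ -/
def BB (μ : ℝ) (h : ℝ → ℝ) (t : ℝ) : ℝ := ∫ s in Ici t, h s * Real.exp (-(μ * s))


/-- The kernel `e^{-μ|t-s|}`. -/
lemma ker_pos (μ t s : ℝ) : 0 < ker μ t s := Real.exp_pos _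

lemma integrable_exp_neg_mul_abs (hμ : 0 < μ) :
    Integrable (fun s : ℝ => Real.exp (-μ * |s|)) := by
  have h1 : IntegrableOn (fun s : ℝ => Real.exp (-μ * |s|)) (Ioi 0) := by
    refine (exp_neg_integrableOn_Ioi 0 hμ).congr_fun (fun x hx => ?_) measurableSet_Ioi
    rw [abs_of_pos hx]
  have h2 : IntegrableOn (fun s : ℝ => Real.exp (-μ * |s|)) (Iic 0) := by
    rw [← Measure.map_neg_eq_self (volume : Measure ℝ)]
    have m : MeasurableEmbedding fun x : ℝ => -x := (Homeomorph.neg ℝ).measurableEmbedding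
    rw [m.integrableOn_map_iff]
    simp_rw [Function.comp_def, abs_neg, neg_preimage, neg_Iic, neg_zero]
    exact (integrableOn_Ici_iff_integrableOn_Ioi).mpr h1
  rw [← integrableOn_univ, ← Iic_union_Ioi (a := (0:ℝ))]
  exact h2.union h1

lemma ker_integrable (hμ : 0 < μ) (t : ℝ) : Integrable (ker μ t) := by
  have := (integrable_exp_neg_mul_abs hμ).comp_sub_left t
  exact this

lemma ker_integral (hμ : 0 < μ) (t : ℝ) : ∫ s, ker μ t s = 2 / μ := by
  have h0 : ∫ s, ker μ t s = ∫ s : ℝ, Real.exp (-μ * |s|) :=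
    integral_sub_left_eq_self (fun s : ℝ => Real.exp (-μ * |s|)) volume t
  rw [h0, integral_comp_abs (f := fun s : ℝ => Real.exp (-μ * s))]
  have h1 : ∫ x : ℝ in Ioi (0:ℝ), Real.exp (-(μ * x)) = μ⁻¹ • ∫ x : ℝ in Ioi (0:ℝ), Real.exp (-x) := by
    simpa using MeasureTheory.integral_comp_mul_left_Ioi (fun x : ℝ => Real.exp (-x)) 0 hμ
  simp only [neg_mul]
  rw [h1, integral_exp_neg_Ioi_zero, smul_eq_mul, mul_one]
  ring



/-- The periodic solution operator for `u'' - μ² u = h`. -/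
lemma OK.integrable (hμ : 0 < μ) {M : ℝ} {h : ℝ → ℝ} (hh : OK μ M h) (t : ℝ) :
    Integrable (fun s => h s * ker μ t s) :=
  (ker_integrable hμ t).bdd_mul (c := M) hh.meas (ae_of_all _ fun s => by
    simpa [Real.norm_eq_abs] using hh.bdd s)

lemma Tmap_le_Tmap (hμ : 0 < μ) {M₁ M₂ : ℝ} {h₁ h₂ : ℝ → ℝ} (hh₁ : OK μ M₁ h₁)
    (hh₂ : OK μ M₂ h₂) (hle : ∀ s, h₁ s ≤ h₂ s) (t : ℝ) :
    Tmap μ h₂ t ≤ Tmap μ h₁ t := by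
  have hint : ∫ s, h₁ s * ker μ t s ≤ ∫ s, h₂ s * ker μ t s := by
    refine integral_mono (hh₁.integrable hμ t) (hh₂.integrable hμ t) (fun s => ?_)
    exact mul_le_mul_of_nonneg_right (hle s) (Real.exp_pos _).le
  have hc : (0:ℝ) < 1 / (2 * μ) := by positivity
  unfold Tmap
  nlinarith

lemma Tmap_const (hμ : 0 < μ) (c : ℝ) (t : ℝ) :
    Tmap μ (fun _ => c) t = -c / μ ^ 2 := by
  unfold Tmap
  rw [MeasureTheory.integral_const_mul, ker_integral hμ t]
  field_simp

lemma Tmap_periodic (hμ : 0 < μ) {h : ℝ → ℝ} {P : ℝ} (hP : Function.Periodic h P) :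
    Function.Periodic (Tmap μ h) P := by
  intro t
  unfold Tmap
  congr 1
  calc ∫ s, h s * ker μ (t + P) s
      = ∫ s, h (s + P) * ker μ (t + P) (s + P) := by
        rw [integral_add_right_eq_self (fun s => h s * ker μ (t + P) s) P]
    _ = ∫ s, h s * ker μ t s := by
        congr 1; funext s
        rw [hP s]
        congr 1
        unfold ker
        congr 2
        rw [abs_sub_comm, show s + P - (t + P) = s - t by ring, ← abs_sub_comm]



lemma OK.integrableOn_Iic (hμ : 0 < μ) {M : ℝ} {h : ℝ → ℝ} (hh : OK μ M h) (t : ℝ) :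
    IntegrableOn (fun s => h s * Real.exp (μ * s)) (Iic t) := by
  have h1 : IntegrableOn (fun s => (h s * ker μ t s) * Real.exp (μ * t)) (Iic t) :=
    ((hh.integrable hμ t).restrict.mul_const _)
  refine h1.congr_fun (fun s hs => ?_) measurableSet_Iic
  simp only [ker]
  rw [abs_of_nonneg (by simp at hs; linarith), mul_assoc, ← Real.exp_add,
    show -μ * (t - s) + μ * t = μ * s by ring]

lemma OK.integrableOn_Ici (hμ : 0 < μ) {M : ℝ} {h : ℝ → ℝ} (hh : OK μ M h) (t : ℝ) :
    IntegrableOn (fun s => h s * Real.exp (-(μ * s))) (Ici t) := by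
  have h1 : IntegrableOn (fun s => (h s * ker μ t s) * Real.exp (-(μ * t))) (Ici t) :=
    ((hh.integrable hμ t).restrict.mul_const _)
  refine h1.congr_fun (fun s hs => ?_) measurableSet_Ici
  simp only [ker]
  rw [abs_of_nonpos (by simp at hs; linarith), mul_assoc, ← Real.exp_add,
    show -μ * -(t - s) + -(μ * t) = -(μ * s) by ring]

/-- representation of `Tmap` via the primitives. -/
lemma Tmap_eq (hμ : 0 < μ) {M : ℝ} {h : ℝ → ℝ} (hh : OK μ M h) (t : ℝ) :
    Tmap μ h t = -(1 / (2 * μ)) *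
      (Real.exp (-(μ * t)) * AA μ h t + Real.exp (μ * t) * BB μ h t) := by
  unfold Tmap AA BB
  congr 1
  have hsplit := integral_Iic_add_Ioi (b := t) (f := fun s => h s * ker μ t s) (μ := volume)
      (hh.integrable hμ t).integrableOn (hh.integrable hμ t).integrableOn
  rw [← hsplit]
  congr 1
  · rw [← MeasureTheory.integral_const_mul]
    refine setIntegral_congr_fun measurableSet_Iic (fun s hs => ?_)
    simp only [ker]
    rw [show Real.exp (-(μ * t)) * (h s * Real.exp (μ * s))
        = h s * (Real.exp (-(μ*t)) * Real.exp (μ * s)) by ring, ← Real.exp_add,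
      abs_of_nonneg (by simp at hs; linarith),
      show -(μ * t) + μ * s = -μ * (t - s) by ring]
  · rw [← MeasureTheory.integral_Ici_eq_integral_Ioi, ← MeasureTheory.integral_const_mul]
    refine setIntegral_congr_fun measurableSet_Ici (fun s hs => ?_)
    simp only [ker]
    rw [show Real.exp (μ * t) * (h s * Real.exp (-(μ * s)))
        = h s * (Real.exp (μ*t) * Real.exp (-(μ * s))) by ring, ← Real.exp_add,
      abs_of_nonpos (by simp at hs; linarith),
      show μ * t + -(μ * s) = -μ * -(t - s) by ring]

lemma AA_sub (hμ : 0 < μ) {M : ℝ} {h : ℝ → ℝ} (hh : OK μ M h) (t : ℝ) :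
    AA μ h t = AA μ h 0 + ∫ s in (0:ℝ)..t, h s * Real.exp (μ * s) := by
  have := integral_Iic_sub_Iic (hh.integrableOn_Iic hμ 0) (hh.integrableOn_Iic hμ t)
  unfold AA
  linarith [this]

lemma OK.neg {M : ℝ} {h : ℝ → ℝ} (hh : OK μ M h) : OK μ M (fun s => h (-s)) := by
  have mp : MeasurePreserving (fun x : ℝ => -x) volume volume :=
    ⟨measurable_neg, Measure.map_neg_eq_self _⟩
  exact ⟨hh.meas.comp_quasiMeasurePreserving mp.quasiMeasurePreserving,
    fun s => hh.bdd (-s)⟩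

lemma BB_eq_AA_neg (hμ : 0 < μ) {h : ℝ → ℝ} (t : ℝ) :
    BB μ h t = AA μ (fun s => h (-s)) (-t) := by
  unfold AA BB
  have := integral_comp_neg_Iic (-t) (fun s => h s * Real.exp (-(μ * s)))
  simp only [neg_neg, mul_neg, neg_mul] at this
  rw [MeasureTheory.integral_Ici_eq_integral_Ioi, ← this]

lemma BB_sub (hμ : 0 < μ) {M : ℝ} {h : ℝ → ℝ} (hh : OK μ M h) (t : ℝ) :
    BB μ h t = BB μ h 0 - ∫ s in (0:ℝ)..t, h s * Real.exp (-(μ * s)) := by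
  rw [BB_eq_AA_neg hμ, BB_eq_AA_neg hμ, AA_sub hμ hh.neg (-t), neg_zero]
  congr 1
  have := intervalIntegral.integral_comp_neg (a := (0:ℝ)) (b := -t)
      (f := fun s => h s * Real.exp (-(μ * s)))
  simp only [neg_neg, neg_zero, mul_neg, neg_mul] at this ⊢
  rw [this, intervalIntegral.integral_symm]



lemma OK.ii_A (hμ : 0 < μ) {M : ℝ} {h : ℝ → ℝ} (hh : OK μ M h) (a b : ℝ) :
    IntervalIntegrable (fun s => h s * Real.exp (μ * s)) volume a b := by
  rw [intervalIntegrable_iff]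
  refine (hh.integrableOn_Iic hμ (max a b)).mono_set (fun x hx => ?_)
  rw [Set.uIoc, Set.mem_Ioc] at hx
  exact hx.2

lemma OK.ii_B (hμ : 0 < μ) {M : ℝ} {h : ℝ → ℝ} (hh : OK μ M h) (a b : ℝ) :
    IntervalIntegrable (fun s => h s * Real.exp (-(μ * s))) volume a b := by
  rw [intervalIntegrable_iff]
  refine (hh.integrableOn_Ici hμ (min a b)).mono_set (fun x hx => ?_)
  rw [Set.uIoc, Set.mem_Ioc] at hx
  exact le_of_lt hx.1

lemma AA_continuous (hμ : 0 < μ) {M : ℝ} {h : ℝ → ℝ} (hh : OK μ M h) :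
    Continuous (AA μ h) := by
  have : AA μ h = fun t => AA μ h 0 + ∫ s in (0:ℝ)..t, h s * Real.exp (μ * s) :=
    funext (AA_sub hμ hh)
  rw [this]
  exact continuous_const.add (intervalIntegral.continuous_primitive (hh.ii_A hμ) 0)

lemma BB_continuous (hμ : 0 < μ) {M : ℝ} {h : ℝ → ℝ} (hh : OK μ M h) :
    Continuous (BB μ h) := by
  have : BB μ h = fun t => BB μ h 0 - ∫ s in (0:ℝ)..t, h s * Real.exp (-(μ * s)) :=
    funext (BB_sub hμ hh)
  rw [this]
  exact continuous_const.sub (intervalIntegral.continuous_primitive (hh.ii_B hμ) 0)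

lemma Tmap_continuous (hμ : 0 < μ) {M : ℝ} {h : ℝ → ℝ} (hh : OK μ M h) :
    Continuous (Tmap μ h) := by
  have : Tmap μ h = fun t => -(1 / (2 * μ)) *
      (Real.exp (-(μ * t)) * AA μ h t + Real.exp (μ * t) * BB μ h t) :=
    funext (Tmap_eq hμ hh)
  rw [this]
  have cA := AA_continuous hμ hh
  have cB := BB_continuous hμ hh
  continuity



variable {M : ℝ} {h : ℝ → ℝ}

/-- candidate first derivative of `Tmap μ h` -/
def DD (μ : ℝ) (h : ℝ → ℝ) (t : ℝ) : ℝ :=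
  (1 / 2) * (Real.exp (-(μ * t)) * AA μ h t - Real.exp (μ * t) * BB μ h t)

lemma hasDerivAt_AA (hμ : 0 < μ) (hh : OK μ M h) (hc : Continuous h) (t : ℝ) :
    HasDerivAt (AA μ h) (h t * Real.exp (μ * t)) t := by
  have he : AA μ h = fun u => AA μ h 0 + ∫ s in (0:ℝ)..u, h s * Real.exp (μ * s) :=
    funext (AA_sub hμ hh)
  rw [he]
  have hcont : Continuous fun s => h s * Real.exp (μ * s) := by continuity
  exact ((intervalIntegral.integral_hasDerivAt_right (hh.ii_A hμ 0 t)
    (hcont.stronglyMeasurableAtFilter _ _) hcont.continuousAt)).const_add _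

lemma hasDerivAt_BB (hμ : 0 < μ) (hh : OK μ M h) (hc : Continuous h) (t : ℝ) :
    HasDerivAt (BB μ h) (-(h t * Real.exp (-(μ * t)))) t := by
  have he : BB μ h = fun u => BB μ h 0 - ∫ s in (0:ℝ)..u, h s * Real.exp (-(μ * s)) :=
    funext (BB_sub hμ hh)
  rw [he]
  have hcont : Continuous fun s => h s * Real.exp (-(μ * s)) := by continuity
  exact ((intervalIntegral.integral_hasDerivAt_right (hh.ii_B hμ 0 t)
    (hcont.stronglyMeasurableAtFilter _ _) hcont.continuousAt)).const_sub _

lemma hasDerivAt_e1 (μ t : ℝ) :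
    HasDerivAt (fun u : ℝ => Real.exp (-(μ * u))) (-μ * Real.exp (-(μ * t))) t := by
  have := (((hasDerivAt_id t).const_mul μ).neg).exp
  simpa [mul_comm] using this

lemma hasDerivAt_e2 (μ t : ℝ) :
    HasDerivAt (fun u : ℝ => Real.exp (μ * u)) (μ * Real.exp (μ * t)) t := by
  have := ((hasDerivAt_id t).const_mul μ).exp
  simpa [mul_comm] using this

lemma hasDerivAt_Tmap (hμ : 0 < μ) (hh : OK μ M h) (hc : Continuous h) (t : ℝ) :
    HasDerivAt (Tmap μ h) (DD μ h t) t := by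
  have he : Tmap μ h = fun t => -(1 / (2 * μ)) *
      (Real.exp (-(μ * t)) * AA μ h t + Real.exp (μ * t) * BB μ h t) :=
    funext (Tmap_eq hμ hh)
  rw [he]
  have hd := (((hasDerivAt_e1 μ t).mul (hasDerivAt_AA hμ hh hc t)).add
    ((hasDerivAt_e2 μ t).mul (hasDerivAt_BB hμ hh hc t))).const_mul (-(1 / (2 * μ)))
  convert hd using 1
  · rfl
  · rfl
  · rfl
  unfold DD
  have h1 : Real.exp (-(μ * t)) * Real.exp (μ * t) = 1 := by
    rw [← Real.exp_add]; simp
  field_simp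
  nlinarith [h1, Real.exp_pos (μ * t), Real.exp_pos (-(μ * t))]

lemma hasDerivAt_DD (hμ : 0 < μ) (hh : OK μ M h) (hc : Continuous h) (t : ℝ) :
    HasDerivAt (DD μ h) (μ ^ 2 * Tmap μ h t + h t) t := by
  have hd := (((hasDerivAt_e1 μ t).mul (hasDerivAt_AA hμ hh hc t)).sub
    ((hasDerivAt_e2 μ t).mul (hasDerivAt_BB hμ hh hc t))).const_mul ((1:ℝ) / 2)
  convert hd using 1
  · rfl
  · rfl
  · rfl
  rw [Tmap_eq hμ hh t]
  have h1 : Real.exp (-(μ * t)) * Real.exp (μ * t) = 1 := by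
    rw [← Real.exp_add]; simp
  field_simp
  linear_combination (-2 * h t) * h1

lemma Tmap_contDiff (hμ : 0 < μ) (hh : OK μ M h) (hc : Continuous h) :
    ContDiff ℝ 2 (Tmap μ h) := by
  have hder : deriv (Tmap μ h) = DD μ h :=
    funext fun t => (hasDerivAt_Tmap hμ hh hc t).deriv
  have hder2 : deriv (DD μ h) = fun t => μ ^ 2 * Tmap μ h t + h t :=
    funext fun t => (hasDerivAt_DD hμ hh hc t).deriv
  have hdiff : Differentiable ℝ (Tmap μ h) :=
    fun t => (hasDerivAt_Tmap hμ hh hc t).differentiableAt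
  have hdiff2 : Differentiable ℝ (DD μ h) :=
    fun t => (hasDerivAt_DD hμ hh hc t).differentiableAt
  have hcont2 : Continuous (deriv (DD μ h)) := by
    rw [hder2]
    exact (continuous_const.mul (Tmap_continuous hμ hh)).add hc
  rw [show (2 : WithTop ℕ∞) = 1 + 1 from rfl, contDiff_succ_iff_deriv]
  refine ⟨hdiff, by simp, ?_⟩
  rw [hder, contDiff_one_iff_deriv]
  exact ⟨hdiff2, hcont2⟩

lemma Tmap_deriv2 (hμ : 0 < μ) (hh : OK μ M h) (hc : Continuous h) (t : ℝ) :
    deriv (deriv (Tmap μ h)) t = μ ^ 2 * Tmap μ h t + h t := by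
  have hder : deriv (Tmap μ h) = DD μ h :=
    funext fun t => (hasDerivAt_Tmap hμ hh hc t).deriv
  rw [hder]
  exact (hasDerivAt_DD hμ hh hc t).deriv



lemma abs_sin_sub_le (a b : ℝ) : |Real.sin a - Real.sin b| ≤ |a - b| := by
  rw [Real.sin_sub_sin, abs_mul, abs_mul, abs_two]
  have h1 := Real.abs_sin_le_abs (x := (a - b) / 2)
  have h2 := Real.abs_cos_le_one ((a + b) / 2)
  have h3 : |(a - b) / 2| = |a - b| / 2 := by rw [abs_div]; simp
  nlinarith [abs_nonneg (Real.sin ((a - b) / 2)), abs_nonneg (a - b),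
    abs_nonneg (Real.cos ((a + b) / 2))]

lemma abs_cos_sub_le (a b : ℝ) : |Real.cos a - Real.cos b| ≤ |a - b| := by
  rw [Real.cos_sub_cos, abs_mul, abs_mul, show |(-2:ℝ)| = 2 by norm_num]
  have h1 := Real.abs_sin_le_abs (x := (a - b) / 2)
  have h2 := Real.abs_sin_le_one ((a + b) / 2)
  have h3 : |(a - b) / 2| = |a - b| / 2 := by rw [abs_div]; simp
  nlinarith [abs_nonneg (Real.sin ((a - b) / 2)), abs_nonneg (a - b),
    abs_nonneg (Real.sin ((a + b) / 2))]

/-- the nonlinearity shifted by `-lam * r` -/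
def GG (f : ℝ → ℝ) (lam : ℝ) (s r : ℝ) : ℝ := f s * Real.sin r - Real.cos r - lam * r

/-- the monotone iteration -/
def seqq (f : ℝ → ℝ) (lam μ : ℝ) : ℕ → ℝ → ℝ
  | 0 => fun _ => Real.pi
  | n + 1 => Tmap μ (fun s => GG f lam s (seqq f lam μ n s))

section G
variable {f : ℝ → ℝ} {C₀ lam : ℝ}
lemma GG_anti (hC : ∀ s, |f s| ≤ C₀) (hlam : C₀ + 1 ≤ lam) {s r₁ r₂ : ℝ} (h12 : r₁ ≤ r₂) :
    GG f lam s r₂ ≤ GG f lam s r₁ := by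
  unfold GG
  have h1 : |Real.sin r₂ - Real.sin r₁| ≤ r₂ - r₁ := by
    simpa [abs_of_nonneg (sub_nonneg.mpr h12)] using abs_sin_sub_le r₂ r₁
  have h2 : |Real.cos r₂ - Real.cos r₁| ≤ r₂ - r₁ := by
    simpa [abs_of_nonneg (sub_nonneg.mpr h12)] using abs_cos_sub_le r₂ r₁
  have h3 : f s * Real.sin r₂ - f s * Real.sin r₁ ≤ C₀ * (r₂ - r₁) := by
    have : f s * Real.sin r₂ - f s * Real.sin r₁ = f s * (Real.sin r₂ - Real.sin r₁) := by ring
    rw [this]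
    calc f s * (Real.sin r₂ - Real.sin r₁) ≤ |f s * (Real.sin r₂ - Real.sin r₁)| := le_abs_self _
      _ = |f s| * |Real.sin r₂ - Real.sin r₁| := abs_mul _ _
      _ ≤ C₀ * (r₂ - r₁) := by
          apply mul_le_mul (hC s) h1 (abs_nonneg _) ((abs_nonneg (f s)).trans (hC s))
  have h4 := (abs_le.mp h2).1
  nlinarith [mul_nonneg (sub_nonneg.mpr hlam) (sub_nonneg.mpr h12)]

lemma GG_bdd (hC : ∀ s, |f s| ≤ C₀) (hlam : 0 ≤ lam) {s r : ℝ} (hr : r ∈ Icc 0 Real.pi) :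
    |GG f lam s r| ≤ C₀ + 1 + lam * Real.pi := by
  unfold GG
  have h1 : |f s * Real.sin r| ≤ C₀ := by
    rw [abs_mul]
    calc |f s| * |Real.sin r| ≤ C₀ * 1 :=
      mul_le_mul (hC s) (Real.abs_sin_le_one r) (abs_nonneg _) ((abs_nonneg (f s)).trans (hC s))
    _ = C₀ := mul_one _
  have h2 := Real.abs_cos_le_one r
  have h3 : |lam * r| ≤ lam * Real.pi := by
    rw [abs_mul, abs_of_nonneg hlam, abs_of_nonneg hr.1]
    exact mul_le_mul_of_nonneg_left hr.2 hlam
  have ha := abs_le.mp h1; have hb := abs_le.mp h2; have hc := abs_le.mp h3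
  rw [abs_le]; constructor <;> linarith

lemma GG_zero (s : ℝ) : GG f lam s 0 = -1 := by simp [GG]

lemma GG_pi (s : ℝ) : GG f lam s Real.pi = 1 - lam * Real.pi := by simp [GG]

lemma GG_ok (hμ : 0 < μ) (hfc : Continuous f) (hC : ∀ s, |f s| ≤ C₀) (hlam : 0 ≤ lam)
    {w : ℝ → ℝ} (hw : AEStronglyMeasurable w volume) (hwb : ∀ t, w t ∈ Icc 0 Real.pi) :
    OK μ (C₀ + 1 + lam * Real.pi) (fun s => GG f lam s (w s)) := by
  constructor
  · exact ((hfc.aestronglyMeasurable.mul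
      (Real.continuous_sin.comp_aestronglyMeasurable hw)).sub
      (Real.continuous_cos.comp_aestronglyMeasurable hw)).sub (hw.const_mul lam)
  · exact fun s => GG_bdd hC hlam (hwb s)

end G


end Stmt7

open Stmt7 in
theorem stmt_7
    (f : ℝ → ℝ) (hf : Continuous f)
    (hper : Function.Periodic f (2 * Real.pi))
    (hbdd : ∃ C : ℝ, ∀ t, |f t| ≤ C) :
    ∃ q : ℝ → ℝ, ContDiff ℝ 2 q ∧ Function.Periodic q (2 * Real.pi) ∧
      (∀ t, deriv (deriv q) t = f t * Real.sin (q t) - Real.cos (q t)) ∧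
      (∀ t, q t ∈ Set.Ioo (0:ℝ) Real.pi) := by
  obtain ⟨C, hC⟩ := hbdd
  set C₀ := max C 0 with hC₀def
  have hC₀ : ∀ s, |f s| ≤ C₀ := fun s => (hC s).trans (le_max_left _ _)
  have hC₀0 : (0:ℝ) ≤ C₀ := le_max_right _ _
  set lam := C₀ + 2 with hlamdef
  have hlam0 : 0 < lam := by positivity
  set μ := Real.sqrt lam with hμdef
  have hμ : 0 < μ := Real.sqrt_pos.mpr hlam0
  have hμ2 : μ ^ 2 = lam := Real.sq_sqrt hlam0.le
  set M := C₀ + 1 + lam * Real.pi with hMdef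
  have hpi := Real.pi_pos
  have hpigt : 2 < Real.pi := by
    have := Real.pi_gt_three; linarith
  have hlamge : C₀ + 1 ≤ lam := by linarith
  have hinvlam : 0 < 1 / lam := by positivity
  have hinvlam2 : 1 / lam ≤ 1 / 2 := by
    rw [div_le_div_iff₀ hlam0 two_pos]; linarith
  have okc : ∀ c : ℝ, OK μ |c| (fun _ => c) :=
    fun c => ⟨aestronglyMeasurable_const, fun _ => le_refl _⟩
  -- the invariant of the iteration
  have inv : ∀ n, Continuous (seqq f lam μ n) ∧
      Function.Periodic (seqq f lam μ n) (2 * Real.pi) ∧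
      (∀ t, seqq f lam μ n t ∈ Icc 0 Real.pi) := by
    intro n
    induction n with
    | zero => exact ⟨continuous_const, fun t => rfl, fun t => ⟨hpi.le, le_refl _⟩⟩
    | succ n ih =>
      obtain ⟨hcont, hperi, hbox⟩ := ih
      have hok : OK μ M (fun s => GG f lam s (seqq f lam μ n s)) :=
        GG_ok hμ hf hC₀ hlam0.le hcont.aestronglyMeasurable hbox
      have hGper : Function.Periodic (fun s => GG f lam s (seqq f lam μ n s)) (2*Real.pi) := by
        intro s; simp only [GG]; rw [hper s, hperi s]
      refine ⟨Tmap_continuous hμ hok, Tmap_periodic hμ hGper, fun t => ?_⟩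
      constructor
      · have hle : ∀ s, GG f lam s (seqq f lam μ n s) ≤ (fun _ => (-1:ℝ)) s := by
          intro s
          have := GG_anti (f := f) (s := s) hC₀ hlamge (hbox s).1
          rw [GG_zero] at this
          exact this
        have h2 := Tmap_le_Tmap hμ hok (okc (-1)) hle t
        rw [Tmap_const hμ, hμ2] at h2
        have : seqq f lam μ (n+1) t = Tmap μ (fun s => GG f lam s (seqq f lam μ n s)) t := rfl
        rw [this]
        have : (0:ℝ) ≤ 1 / lam := hinvlam.le
        calc (0:ℝ) ≤ - -1 / lam := by rw [neg_neg]; exact hinvlam.le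
          _ ≤ _ := h2
      · have hle : ∀ s, (fun _ => (1 - lam * Real.pi)) s ≤ GG f lam s (seqq f lam μ n s) := by
          intro s
          have := GG_anti (f := f) (s := s) hC₀ hlamge (hbox s).2
          rw [GG_pi] at this
          exact this
        have h2 := Tmap_le_Tmap hμ (okc _) hok hle t
        rw [Tmap_const hμ, hμ2] at h2
        have he : seqq f lam μ (n+1) t = Tmap μ (fun s => GG f lam s (seqq f lam μ n s)) t := rfl
        rw [he]
        calc Tmap μ (fun s => GG f lam s (seqq f lam μ n s)) t
            ≤ -(1 - lam * Real.pi) / lam := h2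
          _ ≤ Real.pi := by
              rw [div_le_iff₀ hlam0]
              nlinarith
  -- refined bounds on all iterates past the first
  have step_bounds : ∀ n t, 1/lam ≤ seqq f lam μ (n+1) t ∧
      seqq f lam μ (n+1) t ≤ Real.pi - 1/lam := by
    intro n t
    obtain ⟨hcont, hperi, hbox⟩ := inv n
    have hok : OK μ M (fun s => GG f lam s (seqq f lam μ n s)) :=
      GG_ok hμ hf hC₀ hlam0.le hcont.aestronglyMeasurable hbox
    constructor
    · have hle : ∀ s, GG f lam s (seqq f lam μ n s) ≤ (fun _ => (-1:ℝ)) s := by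
        intro s
        have := GG_anti (f := f) (s := s) hC₀ hlamge (hbox s).1
        rw [GG_zero] at this
        exact this
      have h2 := Tmap_le_Tmap hμ hok (okc (-1)) hle t
      rw [Tmap_const hμ, hμ2] at h2
      calc 1/lam = - -1 / lam := by ring
        _ ≤ _ := h2
    · have hle : ∀ s, (fun _ => (1 - lam * Real.pi)) s ≤ GG f lam s (seqq f lam μ n s) := by
        intro s
        have := GG_anti (f := f) (s := s) hC₀ hlamge (hbox s).2
        rw [GG_pi] at this
        exact this
      have h2 := Tmap_le_Tmap hμ (okc _) hok hle t
      rw [Tmap_const hμ, hμ2] at h2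
      calc seqq f lam μ (n+1) t ≤ -(1 - lam * Real.pi) / lam := h2
        _ = Real.pi - 1/lam := by field_simp; ring
  -- the iteration is decreasing
  have dec : ∀ n, ∀ t, seqq f lam μ (n+1) t ≤ seqq f lam μ n t := by
    intro n
    induction n with
    | zero =>
      intro t
      calc seqq f lam μ 1 t ≤ Real.pi - 1/lam := (step_bounds 0 t).2
        _ ≤ Real.pi := by linarith
    | succ n ih =>
      intro t
      have hok1 : OK μ M (fun s => GG f lam s (seqq f lam μ n s)) :=
        GG_ok hμ hf hC₀ hlam0.le (inv n).1.aestronglyMeasurable (inv n).2.2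
      have hok2 : OK μ M (fun s => GG f lam s (seqq f lam μ (n+1) s)) :=
        GG_ok hμ hf hC₀ hlam0.le (inv (n+1)).1.aestronglyMeasurable (inv (n+1)).2.2
      have hle : ∀ s, GG f lam s (seqq f lam μ n s) ≤ GG f lam s (seqq f lam μ (n+1) s) :=
        fun s => GG_anti (f := f) (s := s) hC₀ hlamge (ih s)
      exact Tmap_le_Tmap hμ hok1 hok2 hle t
  have antit : ∀ t, Antitone fun n => seqq f lam μ n t :=
    fun t => antitone_nat_of_succ_le (fun n => dec n t)
  have hbdl : ∀ t, BddBelow (Set.range fun n => seqq f lam μ n t) := by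
    intro t
    exact ⟨0, by rintro x ⟨n, rfl⟩; exact ((inv n).2.2 t).1⟩
  set qq : ℝ → ℝ := fun t => ⨅ n, seqq f lam μ n t with hqqdef
  have hconv : ∀ t, Tendsto (fun n => seqq f lam μ n t) atTop (𝓝 (qq t)) :=
    fun t => tendsto_atTop_ciInf (antit t) (hbdl t)
  have hqlo : ∀ t, 1/lam ≤ qq t := by
    intro t
    refine le_ciInf (fun n => ?_)
    cases n with
    | zero =>
      show 1/lam ≤ Real.pi
      linarith
    | succ n => exact (step_bounds n t).1
  have hqhi : ∀ t, qq t ≤ Real.pi - 1/lam := by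
    intro t
    exact (ciInf_le (hbdl t) 1).trans (step_bounds 0 t).2
  have hqbox : ∀ t, qq t ∈ Icc 0 Real.pi := by
    intro t
    exact ⟨hinvlam.le.trans (hqlo t), (hqhi t).trans (by linarith)⟩
  have hqper : Function.Periodic qq (2 * Real.pi) := by
    intro t
    simp only [hqqdef]
    exact iInf_congr (fun n => (inv n).2.1 t)
  have hqaesm : AEStronglyMeasurable qq volume :=
    aestronglyMeasurable_of_tendsto_ae atTop
      (fun n => (inv n).1.aestronglyMeasurable) (ae_of_all _ hconv)
  have hokq : OK μ M (fun s => GG f lam s (qq s)) :=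
    GG_ok hμ hf hC₀ hlam0.le hqaesm hqbox
  -- fixed point property
  have hfix : ∀ t, qq t = Tmap μ (fun s => GG f lam s (qq s)) t := by
    intro t
    have h1 : Tendsto (fun n => seqq f lam μ (n+1) t) atTop (𝓝 (qq t)) :=
      (hconv t).comp (tendsto_add_atTop_nat 1)
    have h2 : Tendsto (fun n => ∫ s, GG f lam s (seqq f lam μ n s) * ker μ t s) atTop
        (𝓝 (∫ s, GG f lam s (qq s) * ker μ t s)) := by
      refine tendsto_integral_of_dominated_convergence (fun s => M * ker μ t s)
        (fun n => ?_) ((ker_integrable hμ t).const_mul M) (fun n => ae_of_all _ fun s => ?_)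
        (ae_of_all _ fun s => ?_)
      · exact (GG_ok hμ hf hC₀ hlam0.le (inv n).1.aestronglyMeasurable (inv n).2.2).meas.mul
          ((Real.continuous_exp.comp (by fun_prop)).aestronglyMeasurable)
      · have hk : (0:ℝ) < ker μ t s := Real.exp_pos _
        rw [Real.norm_eq_abs, abs_mul, abs_of_pos hk]
        exact mul_le_mul_of_nonneg_right (GG_bdd hC₀ hlam0.le ((inv n).2.2 s)) hk.le
      · have hcontr : Continuous fun r => GG f lam s r * ker μ t s := by
          unfold GG; fun_prop
        exact (hcontr.tendsto _).comp (hconv s)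
    have h3 : Tendsto (fun n => seqq f lam μ (n+1) t) atTop
        (𝓝 (Tmap μ (fun s => GG f lam s (qq s)) t)) := by
      have : (fun n => seqq f lam μ (n+1) t) =
          fun n => -(1 / (2*μ)) * ∫ s, GG f lam s (seqq f lam μ n s) * ker μ t s := rfl
      rw [this]
      exact h2.const_mul _
    exact tendsto_nhds_unique h1 h3
  have hqq_eq : qq = Tmap μ (fun s => GG f lam s (qq s)) := funext hfix
  have hqcont : Continuous qq := by
    rw [hqq_eq]; exact Tmap_continuous hμ hokq
  have hGcont : Continuous fun s => GG f lam s (qq s) := by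
    unfold GG; fun_prop
  refine ⟨qq, ?_, hqper, ?_, ?_⟩
  · rw [hqq_eq]; exact Tmap_contDiff hμ hokq hGcont
  · intro t
    have := Tmap_deriv2 hμ hokq hGcont t
    rw [hqq_eq]
    rw [this, ← hqq_eq, hμ2]
    simp only [GG]
    ring
  · intro t
    exact ⟨lt_of_lt_of_le hinvlam (hqlo t), lt_of_le_of_lt (hqhi t) (by linarith)⟩

end
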